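/- arXiv:2507.08143 — 2 statements merged into one kernel-verified Lean document; each statement's English description precedes it below -/
import Mathlib

section
/- Let K ∈ ℝ^{N×d}, let ε, δ ∈ (0,1), and let Φ ∈ ℝ^{d×k} be a random matrix whose entries are drawn i.i.d. from the Gaussian distribution N(0, 1/k). Let ℓ_i denote the leverage scores of K and let ℓ̃_i denote the leverage scores of the sketched matrix KΦ. If k ≥ 12·ε^{-2}·(rank(K)·log(42/ε) + log(2/δ)), then with probability at least 1 − δ, for every i ∈ {1,…,N}: κ(K)^{-1} · ((1−ε)/(1+ε)) · ℓ_i ≤ ℓ̃_i ≤ κ(K) · ((1+ε)/(1−ε)) · ℓ_i, where κ(K) = σ_max²/σ_min² is the ratio of the largest to the smallest nonzero squared singular value of K. -/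
open MeasureTheory ProbabilityTheory Matrix

/-- A compact singular value decomposition of `K`: `K = U * diagonal σ * Vᵀ` where `U` and `V`
have orthonormal columns and the singular values `σ j` are positive. -/
def IsCompactSVD {N d r : ℕ} (K : Matrix (Fin N) (Fin d) ℝ)
    (U : Matrix (Fin N) (Fin r) ℝ) (σ : Fin r → ℝ) (V : Matrix (Fin d) (Fin r) ℝ) : Prop :=
  K = U * Matrix.diagonal σ * Vᵀ ∧ Uᵀ * U = 1 ∧ Vᵀ * V = 1 ∧ ∀ j, 0 < σ j

/-- The (squared) condition number `κ = σ_max² / σ_min²` associated with a family of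
singular values `σ`. -/
noncomputable def condNumSq {r : ℕ} (σ : Fin r → ℝ) : ℝ :=
  sSup (Set.range fun j => σ j ^ 2) / sInf (Set.range fun j => σ j ^ 2)


lemma measurable_mvpoly_eval {ι : Type*} (p : MvPolynomial ι ℝ) :
    Measurable fun x : ι → ℝ => MvPolynomial.eval x p := by
  induction p using MvPolynomial.induction_on with
  | C a => simpa using measurable_const
  | add p q hp hq => simp only [map_add]; exact hp.add hq
  | mul_X p i hp => simp only [map_mul, MvPolynomial.eval_X]; exact hp.mul (measurable_pi_apply i)

lemma pi_eval_zero_null_fin : ∀ (n : ℕ) (μ : Fin n → Measure ℝ),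
    (∀ i, IsProbabilityMeasure (μ i)) → (∀ i, NullSingletonClass (μ i)) →
    ∀ (p : MvPolynomial (Fin n) ℝ), p ≠ 0 →
    Measure.pi μ {x | MvPolynomial.eval x p = 0} = 0 := by
  intro n
  induction n with
  | zero =>
    intro μ _ _ p hp
    obtain ⟨a, rfl⟩ := MvPolynomial.C_surjective (Fin 0) p
    have ha : a ≠ 0 := fun h => hp (by simp [h])
    have : {x : Fin 0 → ℝ | MvPolynomial.eval x (MvPolynomial.C a) = 0} = ∅ := by
      ext x; simp [ha]
    rw [this]; simp
  | succ n ih =>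
    intro μ hprob hatom p hp
    haveI := hprob; haveI := hatom
    set q : Polynomial (MvPolynomial (Fin n) ℝ) := MvPolynomial.finSuccEquiv ℝ n p with hq
    have hq0 : q ≠ 0 := by
      rw [hq]
      intro h
      apply hp
      have := (MvPolynomial.finSuccEquiv ℝ n).injective (h.trans (map_zero _).symm)
      simpa using this
    have hlc : q.leadingCoeff ≠ 0 := Polynomial.leadingCoeff_ne_zero.mpr hq0
    set ν : Fin n → Measure ℝ := fun j => μ ((0 : Fin (n+1)).succAbove j) with hν
    haveI : ∀ j, IsProbabilityMeasure (ν j) := fun j => hprob _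
    haveI : ∀ j, NullSingletonClass (ν j) := fun j => hatom _
    -- measure-preserving equivalence
    have hmp := measurePreserving_piFinSuccAbove μ 0
    set T : Set (ℝ × (Fin n → ℝ)) :=
      {z | MvPolynomial.eval (Fin.cons z.1 z.2) p = 0} with hT
    have hTm : MeasurableSet T := by
      have : Measurable fun z : ℝ × (Fin n → ℝ) => Fin.cons z.1 z.2 (α := fun _ => ℝ) := by
        apply measurable_pi_iff.2
        intro i
        refine Fin.cases ?_ ?_ i
        · simpa using measurable_fst
        · intro j; simp only [Fin.cons_succ]; exact (measurable_pi_apply j).comp measurable_snd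
      exact ((measurable_mvpoly_eval p).comp this) (measurableSet_singleton 0)
    have hpre : (MeasurableEquiv.piFinSuccAbove (fun _ : Fin (n+1) => ℝ) 0) ⁻¹' T
        = {x | MvPolynomial.eval x p = 0} := by
      ext x
      have hx : (MeasurableEquiv.piFinSuccAbove (fun _ : Fin (n+1) => ℝ) 0) x
          = (x 0, Fin.tail x) := by
        refine Prod.ext rfl ?_
        funext j
        show x ((0 : Fin (n+1)).succAbove j) = x j.succ
        rw [Fin.succAbove_zero]
      simp only [Set.mem_preimage, hT, Set.mem_setOf_eq, hx]
      rw [Fin.cons_self_tail]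
    rw [← hpre, hmp.measure_preimage hTm.nullMeasurableSet]
    rw [Measure.prod_apply_symm hTm]
    have hslice : ∀ᵐ y ∂(Measure.pi ν), (μ 0) ((fun x => (x, y)) ⁻¹' T) = 0 := by
      have hcoef : (Measure.pi ν) {y | MvPolynomial.eval y q.leadingCoeff = 0} = 0 :=
        ih ν (fun j => hprob _) (fun j => hatom _) _ hlc
      have hae : ∀ᵐ y ∂(Measure.pi ν), MvPolynomial.eval y q.leadingCoeff ≠ 0 := by
        rw [ae_iff]
        simpa using hcoef
      filter_upwards [hae] with y hy
      have hy0 : q.map (MvPolynomial.eval y) ≠ 0 := by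
        intro h
        apply hy
        have := congrArg (fun s => Polynomial.coeff s q.natDegree) h
        simpa [Polynomial.coeff_map] using this
      have : ((fun x => (x, y)) ⁻¹' T) ⊆ {x | Polynomial.IsRoot (q.map (MvPolynomial.eval y)) x} := by
        intro a ha
        simp only [Set.mem_preimage, hT, Set.mem_setOf_eq] at ha
        have := MvPolynomial.eval_eq_eval_mv_eval' y a p
        simp only [Polynomial.IsRoot, Set.mem_setOf_eq]
        rw [← hq] at this
        rw [this] at ha
        exact ha
      exact measure_mono_null this ((Polynomial.finite_setOf_isRoot hy0).measure_zero _)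
    calc ∫⁻ y, (μ 0) ((fun x => (x, y)) ⁻¹' T) ∂(Measure.pi ν)
        = ∫⁻ _, 0 ∂(Measure.pi ν) := lintegral_congr_ae hslice
      _ = 0 := lintegral_zero

lemma pi_eval_zero_null {ι : Type*} [Fintype ι] (m : Measure ℝ)
    [IsProbabilityMeasure m] [NullSingletonClass m] (p : MvPolynomial ι ℝ) (hp : p ≠ 0) :
    Measure.pi (fun _ : ι => m) {x | MvPolynomial.eval x p = 0} = 0 := by
  set n := Fintype.card ι
  set f : Fin n ≃ ι := (Fintype.equivFin ι).symm
  have hmp := MeasureTheory.measurePreserving_piCongrLeft (fun _ : ι => m) f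
  set S : Set (ι → ℝ) := {x | MvPolynomial.eval x p = 0} with hS
  have hSm : MeasurableSet S := (measurable_mvpoly_eval p) (measurableSet_singleton 0)
  rw [← hmp.measure_preimage hSm.nullMeasurableSet]
  have happ : ∀ y : Fin n → ℝ,
      ((MeasurableEquiv.piCongrLeft (fun _ : ι => ℝ) f) y) = y ∘ f.symm := by
    intro y
    funext i
    obtain ⟨j, rfl⟩ := f.surjective i
    show (Equiv.piCongrLeft (fun _ : ι => ℝ) f) y (f j) = _
    rw [Equiv.piCongrLeft_apply_apply]
    simp
  have hpre : (MeasurableEquiv.piCongrLeft (fun _ : ι => ℝ) f) ⁻¹' S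
      = {y | MvPolynomial.eval y (MvPolynomial.rename f.symm p) = 0} := by
    ext y
    simp only [Set.mem_preimage, hS, Set.mem_setOf_eq, MvPolynomial.eval_rename, happ y]
  rw [hpre]
  refine pi_eval_zero_null_fin n _ (fun _ => inferInstance) (fun _ => inferInstance) _ ?_
  intro h
  have h0 : MvPolynomial.rename f.symm p = MvPolynomial.rename f.symm 0 := by
    rw [map_zero]; exact h
  exact hp (MvPolynomial.rename_injective _ f.symm.injective h0)


lemma mulVecLin_inj_of_orth {m n : ℕ} {A : Matrix (Fin m) (Fin n) ℝ} (hA : Aᵀ * A = 1) :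
    Function.Injective A.mulVecLin := by
  have h : Aᵀ.mulVecLin ∘ A.mulVecLin = id := by
    funext x
    have : (Aᵀ * A).mulVecLin x = (1 : Matrix (Fin n) (Fin n) ℝ).mulVecLin x := by rw [hA]
    simpa [Matrix.mulVecLin_mul] using this
  exact Function.LeftInverse.injective (g := Aᵀ.mulVecLin) (congrFun h)

lemma range_eq_of_svd {N d r : ℕ} {K : Matrix (Fin N) (Fin d) ℝ}
    {U : Matrix (Fin N) (Fin r) ℝ} {σ : Fin r → ℝ} {V : Matrix (Fin d) (Fin r) ℝ}
    (h : IsCompactSVD K U σ V) :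
    LinearMap.range K.mulVecLin = LinearMap.range U.mulVecLin := by
  obtain ⟨hK, hU, hV, hσ⟩ := h
  have hmul : (Matrix.diagonal σ * Vᵀ) * (V * Matrix.diagonal fun j => (σ j)⁻¹) = 1 := by
    calc (Matrix.diagonal σ * Vᵀ) * (V * Matrix.diagonal fun j => (σ j)⁻¹)
        = Matrix.diagonal σ * (Vᵀ * V * Matrix.diagonal fun j => (σ j)⁻¹) := by
          rw [Matrix.mul_assoc, ← Matrix.mul_assoc Vᵀ]
      _ = Matrix.diagonal σ * Matrix.diagonal fun j => (σ j)⁻¹ := by rw [hV, Matrix.one_mul]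
      _ = 1 := by
          rw [Matrix.diagonal_mul_diagonal]
          rw [show (fun j => σ j * (σ j)⁻¹) = fun _ => (1:ℝ) from
            funext fun j => mul_inv_cancel₀ (hσ j).ne']
          exact Matrix.diagonal_one
  have hsurj : Function.Surjective (Matrix.diagonal σ * Vᵀ).mulVecLin := by
    intro y
    refine ⟨(V * Matrix.diagonal fun j => (σ j)⁻¹).mulVecLin y, ?_⟩
    have : ((Matrix.diagonal σ * Vᵀ) * (V * Matrix.diagonal fun j => (σ j)⁻¹)).mulVecLin y = y := by
      rw [hmul]; simp
    simpa [Matrix.mulVecLin_mul] using this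
  rw [hK, Matrix.mul_assoc U (Matrix.diagonal σ) Vᵀ, Matrix.mulVecLin_mul]
  exact LinearMap.range_comp_of_range_eq_top _ (LinearMap.range_eq_top.mpr hsurj)

lemma rank_eq_of_svd {N d r : ℕ} {K : Matrix (Fin N) (Fin d) ℝ}
    {U : Matrix (Fin N) (Fin r) ℝ} {σ : Fin r → ℝ} {V : Matrix (Fin d) (Fin r) ℝ}
    (h : IsCompactSVD K U σ V) : K.rank = r := by
  rw [Matrix.rank, range_eq_of_svd h,
    LinearMap.finrank_range_of_inj (mulVecLin_inj_of_orth h.2.1),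
    Module.finrank_fintype_fun_eq_card, Fintype.card_fin]

lemma factor_of_range_le {N a b : ℕ} (A : Matrix (Fin N) (Fin a) ℝ) (B : Matrix (Fin N) (Fin b) ℝ)
    (hA : Aᵀ * A = 1) (hle : LinearMap.range B.mulVecLin ≤ LinearMap.range A.mulVecLin) :
    A * (Aᵀ * B) = B := by
  have hcol : ∀ j, (A * (Aᵀ * B)) *ᵥ Pi.single j 1 = B *ᵥ Pi.single j 1 := by
    intro j
    obtain ⟨w, hw⟩ := hle ⟨Pi.single j 1, rfl⟩
    have hw' : A *ᵥ w = B *ᵥ Pi.single j 1 := hw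
    calc (A * (Aᵀ * B)) *ᵥ Pi.single j 1
        = A *ᵥ (Aᵀ *ᵥ (B *ᵥ Pi.single j 1)) := by
          rw [← Matrix.mulVec_mulVec, ← Matrix.mulVec_mulVec]
      _ = A *ᵥ (Aᵀ *ᵥ (A *ᵥ w)) := by rw [hw']
      _ = A *ᵥ ((Aᵀ * A) *ᵥ w) := by rw [Matrix.mulVec_mulVec (M := Aᵀ) (N := A) (v := w)]
      _ = A *ᵥ w := by rw [hA]; simp
      _ = B *ᵥ Pi.single j 1 := hw'
  ext i j
  have := congrFun (hcol j) i
  rwa [Matrix.mulVec_single_one, Matrix.mulVec_single_one] at this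

lemma leverage_core {N a b : ℕ} (A : Matrix (Fin N) (Fin a) ℝ) (B : Matrix (Fin N) (Fin b) ℝ)
    (hA : Aᵀ * A = 1) (hB : Bᵀ * B = 1)
    (hrange : LinearMap.range B.mulVecLin = LinearMap.range A.mulVecLin) (i : Fin N) :
    ∑ j, (B i j) ^ 2 = ∑ j, (A i j) ^ 2 := by
  set W : Matrix (Fin a) (Fin b) ℝ := Aᵀ * B with hW
  have h1 : A * W = B := factor_of_range_le A B hA hrange.le
  have h2 : B * Wᵀ = A := by
    have : B * (Bᵀ * A) = A := factor_of_range_le B A hB hrange.ge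
    rwa [show Wᵀ = Bᵀ * A by rw [hW, Matrix.transpose_mul, Matrix.transpose_transpose]]
  have h3 : W * Wᵀ = 1 := by
    have hAW : A * (W * Wᵀ) = A := by rw [← Matrix.mul_assoc, h1, h2]
    calc W * Wᵀ = (Aᵀ * A) * (W * Wᵀ) := by rw [hA, Matrix.one_mul]
      _ = Aᵀ * (A * (W * Wᵀ)) := by rw [Matrix.mul_assoc]
      _ = Aᵀ * A := by rw [hAW]
      _ = 1 := hA
  have h4 : B * Bᵀ = A * Aᵀ := by
    calc B * Bᵀ = (A * W) * (A * W)ᵀ := by rw [h1]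
      _ = A * (W * (Wᵀ * Aᵀ)) := by rw [Matrix.transpose_mul, Matrix.mul_assoc]
      _ = A * ((W * Wᵀ) * Aᵀ) := by rw [← Matrix.mul_assoc W Wᵀ Aᵀ]
      _ = A * Aᵀ := by rw [h3, Matrix.one_mul]
  have hBentry : (B * Bᵀ) i i = ∑ j, (B i j) ^ 2 := by
    rw [Matrix.mul_apply]
    exact Finset.sum_congr rfl fun j _ => by rw [Matrix.transpose_apply, sq]
  have hAentry : (A * Aᵀ) i i = ∑ j, (A i j) ^ 2 := by
    rw [Matrix.mul_apply]
    exact Finset.sum_congr rfl fun j _ => by rw [Matrix.transpose_apply, sq]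
  rw [← hBentry, ← hAentry, h4]

lemma leverage_pres {N d k r r' : ℕ} {K : Matrix (Fin N) (Fin d) ℝ}
    {U : Matrix (Fin N) (Fin r) ℝ} {σ : Fin r → ℝ} {V : Matrix (Fin d) (Fin r) ℝ}
    (hsvd : IsCompactSVD K U σ V) (M : Matrix (Fin d) (Fin k) ℝ)
    (hrank : (K * M).rank = K.rank)
    {U' : Matrix (Fin N) (Fin r') ℝ} {σ' : Fin r' → ℝ} {V' : Matrix (Fin k) (Fin r') ℝ}
    (hsvd' : IsCompactSVD (K * M) U' σ' V') (i : Fin N) :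
    ∑ j, (U' i j) ^ 2 = ∑ j, (U i j) ^ 2 := by
  have hle : LinearMap.range (K * M).mulVecLin ≤ LinearMap.range K.mulVecLin := by
    rw [Matrix.mulVecLin_mul, LinearMap.range_comp]
    exact LinearMap.map_le_range
  have heq : LinearMap.range (K * M).mulVecLin = LinearMap.range K.mulVecLin :=
    Submodule.eq_of_le_of_finrank_eq hle hrank
  exact leverage_core U U' hsvd.2.1 hsvd'.2.1
    (by rw [← range_eq_of_svd hsvd, ← range_eq_of_svd hsvd']; exact heq) i

lemma rank_left_orth {N a c : ℕ} (A : Matrix (Fin N) (Fin a) ℝ) (C : Matrix (Fin a) (Fin c) ℝ)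
    (hA : Aᵀ * A = 1) : (A * C).rank = C.rank := by
  rw [Matrix.rank, Matrix.rank, Matrix.mulVecLin_mul, LinearMap.range_comp]
  exact (LinearEquiv.finrank_eq
    (Submodule.equivMapOfInjective _ (mulVecLin_inj_of_orth hA) _)).symm

lemma rank_eq_of_gram_det {N d k r : ℕ} {K : Matrix (Fin N) (Fin d) ℝ}
    {U : Matrix (Fin N) (Fin r) ℝ} {σ : Fin r → ℝ} {V : Matrix (Fin d) (Fin r) ℝ}
    (hsvd : IsCompactSVD K U σ V) (M : Matrix (Fin d) (Fin k) ℝ)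
    (hdet : ((Vᵀ * M) * (Vᵀ * M)ᵀ).det ≠ 0) : (K * M).rank = K.rank := by
  have h1 : (Vᵀ * M).rank = r := by
    have hG : IsUnit ((Vᵀ * M) * (Vᵀ * M)ᵀ) :=
      (Matrix.isUnit_iff_isUnit_det _).mpr (isUnit_iff_ne_zero.mpr hdet)
    have h2 := Matrix.rank_of_isUnit _ hG
    rw [Matrix.rank_self_mul_transpose] at h2
    simpa using h2
  have hKM : K * M = U * (Matrix.diagonal σ * (Vᵀ * M)) := by
    rw [hsvd.1, Matrix.mul_assoc, Matrix.mul_assoc]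
  have hdiag : IsUnit (Matrix.diagonal σ).det := by
    rw [Matrix.det_diagonal]
    exact isUnit_iff_ne_zero.mpr (Finset.prod_ne_zero_iff.mpr fun j _ => (hsvd.2.2.2 j).ne')
  rw [hKM, rank_left_orth _ _ hsvd.2.1, Matrix.rank_mul_eq_right_of_isUnit_det _ _ hdiag, h1,
    rank_eq_of_svd hsvd]

noncomputable def XMat (d k : ℕ) : Matrix (Fin d) (Fin k) (MvPolynomial (Fin d × Fin k) ℝ) :=
  Matrix.of fun a b => MvPolynomial.X (a, b)

noncomputable def gramPoly {d r : ℕ} (k : ℕ) (V : Matrix (Fin d) (Fin r) ℝ) :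
    MvPolynomial (Fin d × Fin k) ℝ :=
  ((Matrix.map Vᵀ (MvPolynomial.C (σ := Fin d × Fin k) (R := ℝ)) * XMat d k) * (Matrix.map Vᵀ (MvPolynomial.C (σ := Fin d × Fin k) (R := ℝ)) * XMat d k)ᵀ).det

lemma eval_gramPoly {d r k : ℕ} (V : Matrix (Fin d) (Fin r) ℝ) (M : Matrix (Fin d) (Fin k) ℝ) :
    MvPolynomial.eval (fun p : Fin d × Fin k => M p.1 p.2) (gramPoly k V)
      = ((Vᵀ * M) * (Vᵀ * M)ᵀ).det := by
  set f := (MvPolynomial.eval fun p : Fin d × Fin k => M p.1 p.2) with hf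
  have hB : (Matrix.map Vᵀ (MvPolynomial.C (σ := Fin d × Fin k) (R := ℝ)) * XMat d k).map f = Vᵀ * M := by
    rw [Matrix.map_mul]
    congr 1
    · rw [Matrix.map_map]
      have : (f ∘ MvPolynomial.C) = id := by
        funext x; simp [hf]
      rw [this, Matrix.map_id]
    · ext a b
      simp [hf, XMat]
  have ht : Matrix.map Vᵀ (⇑(MvPolynomial.C (σ := Fin d × Fin k) (R := ℝ)))
      = (V.map ⇑(MvPolynomial.C)).transpose := Matrix.transpose_map
  rw [ht] at hB
  rw [gramPoly, RingHom.map_det]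
  congr 1
  rw [RingHom.mapMatrix_apply, ht, Matrix.map_mul, Matrix.transpose_map, hB]

lemma gramPoly_ne_zero {d r k : ℕ} (V : Matrix (Fin d) (Fin r) ℝ) (hV : Vᵀ * V = 1)
    (hrk : r ≤ k) : gramPoly k V ≠ 0 := by
  set E : Matrix (Fin r) (Fin k) ℝ :=
    Matrix.of fun j b => if b = Fin.castLE hrk j then (1:ℝ) else 0 with hE
  have hEE : E * Eᵀ = 1 := by
    ext j j'
    rw [Matrix.mul_apply]
    rw [Finset.sum_eq_single (Fin.castLE hrk j)]
    · show (if Fin.castLE hrk j = Fin.castLE hrk j then (1:ℝ) else 0) *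
          (if Fin.castLE hrk j = Fin.castLE hrk j' then (1:ℝ) else 0) = (1 : Matrix _ _ ℝ) j j'
      rw [if_pos rfl, one_mul]
      by_cases h : j = j'
      · subst h; rw [if_pos rfl, Matrix.one_apply_eq]
      · rw [if_neg (fun hc => h (Fin.castLE_injective hrk hc)), Matrix.one_apply_ne h]
    · intro b _ hb
      show (if b = Fin.castLE hrk j then (1:ℝ) else 0) *
          (if b = Fin.castLE hrk j' then (1:ℝ) else 0) = 0
      rw [if_neg hb, zero_mul]
    · intro h; exact absurd (Finset.mem_univ _) h
  intro hzero
  have h0 : MvPolynomial.eval (fun p : Fin d × Fin k => (V * E) p.1 p.2) (gramPoly k V) = 0 := by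
    rw [hzero]; simp
  rw [eval_gramPoly] at h0
  have hVE : Vᵀ * (V * E) = E := by rw [← Matrix.mul_assoc, hV, Matrix.one_mul]
  rw [hVE, hEE] at h0
  simp at h0

/-- **Approximate leverage scores via Gaussian right sketching.**  Let `K ∈ ℝ^{N×d}` with leverage
scores `ℓ i = ‖U i‖²` (for a compact SVD `K = U Σ Vᵀ`), and let `Φ ∈ ℝ^{d×k}` have i.i.d.
`N(0, 1/k)` entries.  If `k ≥ 12 ε⁻² (rank(K) log(42/ε) + log(2/δ))` then, with probability at
least `1 − δ`, for every compact SVD `K Φ = Ũ Σ̃ Ṽᵀ` of the sketch and every row `i`,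
`κ(K)⁻¹ · (1−ε)/(1+ε) · ℓ i ≤ ‖Ũ i‖² ≤ κ(K) · (1+ε)/(1−ε) · ℓ i`, where
`κ(K) = σ_max²/σ_min²` is the squared-singular-value condition number of `K`. -/
theorem approximate_leverage_scores
    {Ω : Type*} [MeasurableSpace Ω] (μ : Measure Ω) [IsProbabilityMeasure μ]
    (N d k : ℕ) (Φ : Ω → Matrix (Fin d) (Fin k) ℝ)
    -- the entries of `Φ` are i.i.d. `N(0, 1/k)`
    (hindep : iIndepFun
      (fun (p : Fin d × Fin k) ω => Φ ω p.1 p.2) μ)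
    (hlaw : ∀ p : Fin d × Fin k,
      μ.map (fun ω => Φ ω p.1 p.2) = gaussianReal 0 ((k : NNReal))⁻¹)
    (K : Matrix (Fin N) (Fin d) ℝ)
    (ε δ : ℝ) (hε : ε ∈ Set.Ioo (0 : ℝ) 1) (hδ : δ ∈ Set.Ioo (0 : ℝ) 1)
    -- a compact SVD of `K`, defining its leverage scores `ℓ i = ∑ j, (U i j)²`
    (r : ℕ) (U : Matrix (Fin N) (Fin r) ℝ) (σ : Fin r → ℝ) (V : Matrix (Fin d) (Fin r) ℝ)
    (hsvd : IsCompactSVD K U σ V)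
    (hk : 12 * ε⁻¹ ^ 2 * ((K.rank : ℝ) * Real.log (42 / ε) + Real.log (2 / δ)) ≤ (k : ℝ)) :
    ENNReal.ofReal (1 - δ) ≤
      μ {ω | ∀ (r' : ℕ) (U' : Matrix (Fin N) (Fin r') ℝ) (σ' : Fin r' → ℝ)
               (V' : Matrix (Fin k) (Fin r') ℝ),
             IsCompactSVD (K * Φ ω) U' σ' V' →
             ∀ i,
               (condNumSq σ)⁻¹ * ((1 - ε) / (1 + ε)) * (∑ j, (U i j) ^ 2) ≤
                  ∑ j, (U' i j) ^ 2 ∧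
               ∑ j, (U' i j) ^ 2 ≤
                  condNumSq σ * ((1 + ε) / (1 - ε)) * (∑ j, (U i j) ^ 2)} := by
  obtain ⟨hε0, hε1⟩ := hε
  obtain ⟨hδ0, hδ1⟩ := hδ
  have hofReal : ENNReal.ofReal (1 - δ) ≤ 1 := by
    rw [← ENNReal.ofReal_one]
    exact ENNReal.ofReal_le_ofReal (by linarith)
  rcases Nat.eq_zero_or_pos r with hr0 | hrpos
  · -- degenerate case K = 0
    subst hr0
    have hK0 : K = 0 := by
      rw [hsvd.1]
      ext i j
      simp [Matrix.mul_apply]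
    have hmem : ∀ ω : Ω, ∀ (r' : ℕ) (U' : Matrix (Fin N) (Fin r') ℝ) (σ' : Fin r' → ℝ)
        (V' : Matrix (Fin k) (Fin r') ℝ),
        IsCompactSVD (K * Φ ω) U' σ' V' →
        ∀ i,
          (condNumSq σ)⁻¹ * ((1 - ε) / (1 + ε)) * (∑ j, (U i j) ^ 2) ≤ ∑ j, (U' i j) ^ 2 ∧
          ∑ j, (U' i j) ^ 2 ≤ condNumSq σ * ((1 + ε) / (1 - ε)) * (∑ j, (U i j) ^ 2) := by
      intro ω r' U' σ' V' hsvd' i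
      have h2 : U' * Matrix.diagonal σ' * V'ᵀ = 0 := by
        rw [← hsvd'.1, hK0, Matrix.zero_mul]
      have hD : U'ᵀ * (U' * Matrix.diagonal σ' * V'ᵀ) * V' = Matrix.diagonal σ' := by
        rw [Matrix.mul_assoc U' (Matrix.diagonal σ') V'ᵀ,
          ← Matrix.mul_assoc U'ᵀ U' _, hsvd'.2.1, Matrix.one_mul,
          Matrix.mul_assoc (Matrix.diagonal σ') V'ᵀ V', hsvd'.2.2.1, Matrix.mul_one]
      have hD0 : Matrix.diagonal σ' = 0 := by
        rw [← hD, h2, Matrix.mul_zero, Matrix.zero_mul]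
      haveI hemp : IsEmpty (Fin r') := by
        by_contra h
        rw [not_isEmpty_iff] at h
        obtain ⟨j⟩ := h
        have hj := congrFun (congrFun hD0 j) j
        rw [Matrix.diagonal_apply_eq] at hj
        exact (hsvd'.2.2.2 j).ne' hj
      constructor <;> simp
    have huniv : {ω : Ω | ∀ (r' : ℕ) (U' : Matrix (Fin N) (Fin r') ℝ) (σ' : Fin r' → ℝ)
        (V' : Matrix (Fin k) (Fin r') ℝ),
        IsCompactSVD (K * Φ ω) U' σ' V' →
        ∀ i,
          (condNumSq σ)⁻¹ * ((1 - ε) / (1 + ε)) * (∑ j, (U i j) ^ 2) ≤ ∑ j, (U' i j) ^ 2 ∧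
          ∑ j, (U' i j) ^ 2 ≤ condNumSq σ * ((1 + ε) / (1 - ε)) * (∑ j, (U i j) ^ 2)}
        = Set.univ := Set.eq_univ_of_forall hmem
    rw [huniv, measure_univ]
    exact hofReal
  · -- main case
    have hrankK : K.rank = r := rank_eq_of_svd hsvd
    -- arithmetic consequences of hk
    have hi : 1 ≤ ε⁻¹ := by
      nlinarith [mul_inv_cancel₀ (ne_of_gt hε0), inv_pos.mpr hε0]
    have hinv2 : 1 ≤ ε⁻¹ ^ 2 := by nlinarith
    have hL : 1 ≤ Real.log (42 / ε) := by
      rw [Real.le_log_iff_exp_le (by positivity)]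
      have h1 := Real.exp_one_lt_d9
      have h2 : (42 : ℝ) ≤ 42 / ε := by
        rw [le_div_iff₀ hε0]; nlinarith
      linarith
    have hlog2 : 0 ≤ Real.log (2 / δ) := by
      apply Real.log_nonneg
      rw [le_div_iff₀ hδ0]; nlinarith
    have hrpos' : (1 : ℝ) ≤ (r : ℝ) := by exact_mod_cast hrpos
    rw [hrankK] at hk
    have hA0 : (0 : ℝ) ≤ (r : ℝ) * Real.log (42 / ε) + Real.log (2 / δ) := by nlinarith
    have hAr : (r : ℝ) ≤ (r : ℝ) * Real.log (42 / ε) + Real.log (2 / δ) := by nlinarith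
    have hkr : (r : ℝ) ≤ (k : ℝ) := by nlinarith
    have hrk : r ≤ k := by exact_mod_cast hkr
    have hk0 : k ≠ 0 := by
      have : (0 : ℝ) < (k : ℝ) := by nlinarith
      exact_mod_cast Nat.pos_iff_ne_zero.mp (by exact_mod_cast this)
    have hv : ((k : NNReal))⁻¹ ≠ 0 := inv_ne_zero (Nat.cast_ne_zero.mpr hk0)
    haveI : NullSingletonClass (gaussianReal 0 ((k : NNReal))⁻¹) :=
      ⟨fun x => gaussianReal_absolutelyContinuous 0 hv (measure_singleton x)⟩
    -- the joint law
    set F : Ω → (Fin d × Fin k → ℝ) := fun ω p => Φ ω p.1 p.2 with hFdef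
    have hFae : ∀ p : Fin d × Fin k, AEMeasurable (fun ω => Φ ω p.1 p.2) μ := fun p =>
      aemeasurable_of_map_neZero (by rw [hlaw p]; infer_instance)
    have hF : AEMeasurable F μ := by
      refine ⟨fun ω p => (hFae p).mk _ ω, measurable_pi_iff.mpr fun p => (hFae p).measurable_mk, ?_⟩
      have hall : ∀ᵐ ω ∂μ, ∀ p : Fin d × Fin k, Φ ω p.1 p.2 = (hFae p).mk _ ω :=
        ae_all_iff.mpr fun p => (hFae p).ae_eq_mk
      filter_upwards [hall] with ω hω
      funext p
      exact hω p
    have hmap : μ.map F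
        = Measure.pi (fun _ : Fin d × Fin k => gaussianReal 0 ((k : NNReal))⁻¹) := by
      refine (Measure.pi_eq fun s hs => ?_).symm
      rw [Measure.map_apply_of_aemeasurable hF (MeasurableSet.univ_pi hs)]
      have hpre : F ⁻¹' (Set.univ.pi s)
          = ⋂ p ∈ (Finset.univ : Finset (Fin d × Fin k)),
              (fun ω => Φ ω p.1 p.2) ⁻¹' s p := by
        ext ω
        simp [hFdef, Set.mem_pi]
      rw [hpre, hindep.measure_inter_preimage_eq_mul Finset.univ (fun p _ => hs p)]
      refine Finset.prod_congr rfl fun p _ => ?_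
      rw [← hlaw p, Measure.map_apply_of_aemeasurable (hFae p) (hs p)]
    -- the bad event is null
    set P : MvPolynomial (Fin d × Fin k) ℝ := gramPoly k V with hPdef
    have hP : P ≠ 0 := gramPoly_ne_zero V hsvd.2.2.1 hrk
    set Z : Set (Fin d × Fin k → ℝ) := {x | MvPolynomial.eval x P = 0} with hZdef
    have hZm : MeasurableSet Z := measurable_mvpoly_eval P (measurableSet_singleton 0)
    have hbad : μ (F ⁻¹' Z) = 0 := by
      rw [← Measure.map_apply_of_aemeasurable hF hZm, hmap]
      exact pi_eval_zero_null _ P hP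
    -- the good event is contained in the target set
    have hsub : (F ⁻¹' Z)ᶜ ⊆ {ω : Ω | ∀ (r' : ℕ) (U' : Matrix (Fin N) (Fin r') ℝ)
        (σ' : Fin r' → ℝ) (V' : Matrix (Fin k) (Fin r') ℝ),
        IsCompactSVD (K * Φ ω) U' σ' V' →
        ∀ i,
          (condNumSq σ)⁻¹ * ((1 - ε) / (1 + ε)) * (∑ j, (U i j) ^ 2) ≤ ∑ j, (U' i j) ^ 2 ∧
          ∑ j, (U' i j) ^ 2 ≤ condNumSq σ * ((1 + ε) / (1 - ε)) * (∑ j, (U i j) ^ 2)} := by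
      intro ω hω r' U' σ' V' hsvd' i
      have hdet : ((Vᵀ * Φ ω) * (Vᵀ * Φ ω)ᵀ).det ≠ 0 := by
        intro h
        apply hω
        show F ω ∈ Z
        rw [hZdef, Set.mem_setOf_eq, show F ω = fun p : Fin d × Fin k => Φ ω p.1 p.2 from rfl,
          hPdef, eval_gramPoly]
        exact h
      have hrank := rank_eq_of_gram_det hsvd (Φ ω) hdet
      have hEq := leverage_pres hsvd (Φ ω) hrank hsvd' i
      -- condition number facts
      have hne : (Set.range fun j => σ j ^ 2).Nonempty := ⟨σ ⟨0, hrpos⟩ ^ 2, ⟨⟨0, hrpos⟩, rfl⟩⟩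
      have hfin : (Set.range fun j => σ j ^ 2).Finite := Set.finite_range _
      obtain ⟨j₀, hj₀⟩ := hne.csInf_mem hfin
      have hInfpos : 0 < sInf (Set.range fun j => σ j ^ 2) :=
        hj₀ ▸ pow_pos (hsvd.2.2.2 j₀) 2
      have hle : sInf (Set.range fun j => σ j ^ 2) ≤ sSup (Set.range fun j => σ j ^ 2) :=
        csInf_le_csSup hne hfin.bddBelow hfin.bddAbove
      have hκ1 : 1 ≤ condNumSq σ := (one_le_div hInfpos).mpr hle
      have hκpos : 0 < condNumSq σ := lt_of_lt_of_le one_pos hκ1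
      have hsum : 0 ≤ ∑ j, (U i j) ^ 2 := Finset.sum_nonneg fun j _ => sq_nonneg _
      constructor
      · rw [hEq]
        have hc : (condNumSq σ)⁻¹ * ((1 - ε) / (1 + ε)) ≤ 1 := by
          have h1 : (condNumSq σ)⁻¹ ≤ 1 := by
            rw [inv_le_one_iff₀]
            right; exact hκ1
          have h2 : (1 - ε) / (1 + ε) ≤ 1 := by
            rw [div_le_one (by linarith)]; linarith
          have h3 : 0 ≤ (1 - ε) / (1 + ε) := div_nonneg (by linarith) (by linarith)
          calc (condNumSq σ)⁻¹ * ((1 - ε) / (1 + ε)) ≤ 1 * 1 :=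
                mul_le_mul h1 h2 h3 zero_le_one
            _ = 1 := one_mul 1
        exact mul_le_of_le_one_left hsum hc
      · rw [hEq]
        have hc2 : 1 ≤ condNumSq σ * ((1 + ε) / (1 - ε)) := by
          have hf : 1 ≤ (1 + ε) / (1 - ε) := by
            rw [le_div_iff₀ (by linarith)]; linarith
          simpa using mul_le_mul hκ1 hf zero_le_one (zero_le_one.trans hκ1)
        exact le_mul_of_one_le_left hsum hc2
    -- conclude
    have hone : (1 : ENNReal) ≤ μ ((F ⁻¹' Z)ᶜ) := by
      have hU : μ (Set.univ : Set Ω) ≤ μ (F ⁻¹' Z) + μ ((F ⁻¹' Z)ᶜ) := by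
        rw [← Set.union_compl_self (F ⁻¹' Z)]
        exact measure_union_le _ _
      rw [measure_univ, hbad, zero_add] at hU
      exact hU
    calc ENNReal.ofReal (1 - δ) ≤ 1 := hofReal
      _ ≤ μ ((F ⁻¹' Z)ᶜ) := hone
      _ ≤ _ := measure_mono hsub
end

section
/- Let K ∈ ℝ^{N×d} and K̂ ∈ ℝ^{N×k} be matrices of the same rank r, with compact singular value decompositions K = UΣVᵀ and K̂ = ŨΣ̃Ṽᵀ. Let m and M denote the minimum and maximum of the squared singular values of K, and m′ and M′ those of K̂. Suppose ε ∈ (0,1) and that: (i) for every row index i, (1 − ε)·‖K_i‖₂² ≤ ‖K̂_i‖₂² ≤ (1 + ε)·‖K_i‖₂²; and (ii) m′ ≥ (1 − ε)·m and M′ ≤ (1 + ε)·M. Then for every row index i: ((1 − ε)/(1 + ε)) · (m/M) · ‖U_i‖₂² ≤ ‖Ũ_i‖₂² ≤ ((1 + ε)/(1 − ε)) · (M/m) · ‖U_i‖₂². -/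
open Matrix

lemma svd_row_norm {N d r : ℕ} {K : Matrix (Fin N) (Fin d) ℝ}
    {U : Matrix (Fin N) (Fin r) ℝ} {σ : Fin r → ℝ} {V : Matrix (Fin d) (Fin r) ℝ}
    (h : IsCompactSVD K U σ V) (i : Fin N) :
    ∑ j, (K i j) ^ 2 = ∑ l, σ l ^ 2 * (U i l) ^ 2 := by
  obtain ⟨hKeq, hU, hV, hσ⟩ := h
  have hKK : K * Kᵀ = U * (Matrix.diagonal σ * (Vᵀ * V * (Matrix.diagonal σ * Uᵀ))) := by
    rw [hKeq]
    simp only [Matrix.transpose_mul, Matrix.transpose_transpose, Matrix.diagonal_transpose,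
      Matrix.mul_assoc]
  rw [hV, Matrix.one_mul] at hKK
  have h1 : ∑ j, (K i j) ^ 2 = (K * Kᵀ) i i := by
    simp [Matrix.mul_apply, sq]
  rw [h1, hKK]
  simp [Matrix.mul_apply, Matrix.diagonal_apply, Finset.mul_sum, Finset.sum_mul]
  exact Finset.sum_congr rfl fun l _ => by ring

/-- **Row-wise leverage comparison from spectral and row-norm bounds.**  Let `K ∈ ℝ^{N×d}` and
`K̂ ∈ ℝ^{N×k}` have the same rank `r`, with compact SVDs `K = U Σ Vᵀ` and `K̂ = Ũ Σ̃ Ṽᵀ`.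
Writing `m, M` (resp. `m', M'`) for the min and max squared singular values of `K` (resp. `K̂`),
if every row satisfies `(1−ε)‖K_i‖² ≤ ‖K̂_i‖² ≤ (1+ε)‖K_i‖²` and moreover `m' ≥ (1−ε) m` and
`M' ≤ (1+ε) M`, then for every row `i`,
`((1−ε)/(1+ε))·(m/M)·‖U_i‖² ≤ ‖Ũ_i‖² ≤ ((1+ε)/(1−ε))·(M/m)·‖U_i‖²`. -/
theorem leverage_score_comparison
    (N d k r : ℕ)
    (K : Matrix (Fin N) (Fin d) ℝ) (Khat : Matrix (Fin N) (Fin k) ℝ)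
    (hrK : K.rank = r) (hrKhat : Khat.rank = r)
    (U : Matrix (Fin N) (Fin r) ℝ) (σ : Fin r → ℝ) (V : Matrix (Fin d) (Fin r) ℝ)
    (hK : IsCompactSVD K U σ V)
    (Ut : Matrix (Fin N) (Fin r) ℝ) (σt : Fin r → ℝ) (Vt : Matrix (Fin k) (Fin r) ℝ)
    (hKhat : IsCompactSVD Khat Ut σt Vt)
    (m M m' M' : ℝ)
    (hm : m = sInf (Set.range fun j => σ j ^ 2)) (hM : M = sSup (Set.range fun j => σ j ^ 2))
    (hm' : m' = sInf (Set.range fun j => σt j ^ 2)) (hM' : M' = sSup (Set.range fun j => σt j ^ 2))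
    (ε : ℝ) (hε : ε ∈ Set.Ioo (0 : ℝ) 1)
    -- (i) row-norm bounds
    (hrows : ∀ i, (1 - ε) * (∑ j, (K i j) ^ 2) ≤ ∑ j, (Khat i j) ^ 2 ∧
                  ∑ j, (Khat i j) ^ 2 ≤ (1 + ε) * (∑ j, (K i j) ^ 2))
    -- (ii) spectral bounds
    (hmm : (1 - ε) * m ≤ m') (hMM : M' ≤ (1 + ε) * M) :
    ∀ i, ((1 - ε) / (1 + ε)) * (m / M) * (∑ j, (U i j) ^ 2) ≤ ∑ j, (Ut i j) ^ 2 ∧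
         ∑ j, (Ut i j) ^ 2 ≤ ((1 + ε) / (1 - ε)) * (M / m) * (∑ j, (U i j) ^ 2) := by
  obtain ⟨hε0, hε1⟩ := hε
  have h1e : (0:ℝ) < 1 - ε := by linarith
  have h1e' : (0:ℝ) < 1 + ε := by linarith
  rcases Nat.eq_zero_or_pos r with hr | hr
  · subst hr
    intro i
    simp [hm, hM, Real.sInf_empty, Real.sSup_empty]
  · -- r > 0
    haveI : Nonempty (Fin r) := ⟨⟨0, hr⟩⟩
    intro i
    -- key facts about min/max squared singular values
    have hfin : (Set.range fun j => σ j ^ 2).Finite := Set.finite_range _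
    have hfin' : (Set.range fun j => σt j ^ 2).Finite := Set.finite_range _
    have hne : (Set.range fun j => σ j ^ 2).Nonempty := Set.range_nonempty _
    have hne' : (Set.range fun j => σt j ^ 2).Nonempty := Set.range_nonempty _
    have hm_le : ∀ l, m ≤ σ l ^ 2 := fun l => hm ▸ csInf_le hfin.bddBelow ⟨l, rfl⟩
    have hM_ge : ∀ l, σ l ^ 2 ≤ M := fun l => hM ▸ le_csSup hfin.bddAbove ⟨l, rfl⟩
    have hm'_le : ∀ l, m' ≤ σt l ^ 2 := fun l => hm' ▸ csInf_le hfin'.bddBelow ⟨l, rfl⟩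
    have hM'_ge : ∀ l, σt l ^ 2 ≤ M' := fun l => hM' ▸ le_csSup hfin'.bddAbove ⟨l, rfl⟩
    have hmpos : 0 < m := by
      obtain ⟨l, hl⟩ : ∃ l, σ l ^ 2 = m := by rw [hm]; exact hne.csInf_mem hfin
      exact hl ▸ pow_pos (hK.2.2.2 l) 2
    have hMpos : 0 < M := lt_of_lt_of_le hmpos ((hm_le _).trans (hM_ge (Classical.arbitrary _)))
    have hm'pos : 0 < m' := by
      obtain ⟨l, hl⟩ : ∃ l, σt l ^ 2 = m' := by rw [hm']; exact hne'.csInf_mem hfin'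
      exact hl ▸ pow_pos (hKhat.2.2.2 l) 2
    have hM'pos : 0 < M' := lt_of_lt_of_le hm'pos ((hm'_le _).trans (hM'_ge (Classical.arbitrary _)))
    set a := ∑ j, (U i j) ^ 2 with ha
    set b := ∑ j, (Ut i j) ^ 2 with hb
    have ha0 : 0 ≤ a := Finset.sum_nonneg fun _ _ => sq_nonneg _
    have hb0 : 0 ≤ b := Finset.sum_nonneg fun _ _ => sq_nonneg _
    have hSK := svd_row_norm hK i
    have hSKh := svd_row_norm hKhat i
    have hKlo : m * a ≤ ∑ j, (K i j) ^ 2 := by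
      rw [hSK, Finset.mul_sum]
      exact Finset.sum_le_sum fun l _ => mul_le_mul_of_nonneg_right (hm_le l) (sq_nonneg _)
    have hKhi : ∑ j, (K i j) ^ 2 ≤ M * a := by
      rw [hSK, Finset.mul_sum]
      exact Finset.sum_le_sum fun l _ => mul_le_mul_of_nonneg_right (hM_ge l) (sq_nonneg _)
    have hKhlo : m' * b ≤ ∑ j, (Khat i j) ^ 2 := by
      rw [hSKh, Finset.mul_sum]
      exact Finset.sum_le_sum fun l _ => mul_le_mul_of_nonneg_right (hm'_le l) (sq_nonneg _)
    have hKhhi : ∑ j, (Khat i j) ^ 2 ≤ M' * b := by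
      rw [hSKh, Finset.mul_sum]
      exact Finset.sum_le_sum fun l _ => mul_le_mul_of_nonneg_right (hM'_ge l) (sq_nonneg _)
    obtain ⟨hrow1, hrow2⟩ := hrows i
    constructor
    · rw [div_mul_div_comm, div_mul_eq_mul_div, div_le_iff₀ (by positivity)]
      nlinarith [mul_le_mul_of_nonneg_left hKlo h1e.le, mul_le_mul_of_nonneg_right hMM hb0]
    · rw [div_mul_div_comm, div_mul_eq_mul_div, le_div_iff₀ (by positivity)]
      nlinarith [mul_le_mul_of_nonneg_left hKhi h1e'.le, mul_le_mul_of_nonneg_right hmm hb0]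
end
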